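/- Let A be a real m×n matrix whose column space has dimension k, let U be a real m×k matrix with orthonormal columns whose columns span the column space of A, let S be a real d×m matrix with rank(SA) = k, and let M be a real n×k matrix such that SAM has orthonormal columns. Then AM has rank k, and the condition number of AM equals the condition number of SU: the largest singular value of AM divided by its smallest singular value equals the largest singular value of SU divided by its smallest singular value. -/

import Mathlib

open Matrix

private lemma sup_eq_inv_inf {k : ℕ} (hk : k ≠ 0) (F G : Fin k → ℝ)
    (hG : ∀ j, 0 < G j)
    (h1 : ∀ i, ∃ j, F i = (G j)⁻¹) (h2 : ∀ j, ∃ i, (G j)⁻¹ = F i) :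
    (⨆ i, F i) = (⨅ j, G j)⁻¹ := by
  haveI : NeZero k := ⟨hk⟩
  obtain ⟨i0, hi0⟩ := Finite.exists_max F
  obtain ⟨j0, hj0⟩ := Finite.exists_min G
  have hsup : (⨆ i, F i) = F i0 :=
    le_antisymm (ciSup_le hi0) (le_ciSup (Set.Finite.bddAbove (Set.finite_range F)) i0)
  have hinf : (⨅ j, G j) = G j0 :=
    le_antisymm (ciInf_le (Set.Finite.bddBelow (Set.finite_range G)) j0) (le_ciInf hj0)
  rw [hsup, hinf]
  obtain ⟨j1, hj1⟩ := h1 i0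
  obtain ⟨i1, hi1⟩ := h2 j0
  apply le_antisymm
  · rw [hj1]
    exact inv_anti₀ (hG j0) (hj0 j1)
  · rw [hi1]
    exact hi0 i1

private lemma matrix_ext_of_mulVec {m n : ℕ} {X Y : Matrix (Fin m) (Fin n) ℝ}
    (h : ∀ x, X *ᵥ x = Y *ᵥ x) : X = Y := by
  ext i j
  have := congrFun (h (Pi.single j 1)) i
  simpa [Matrix.mulVec_single] using this

/-- Condition-number consequence of Proposition 3.1: under the hypotheses of the
proposition, `A * M` has full column rank `k` and the condition number of `A * M`
(the largest singular value divided by the smallest, where the singular values are the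
square roots of the eigenvalues of the Gram matrix) equals that of `S * U`. -/
theorem cond_preconditioned_eq_cond_sketched_basis {m n d k : ℕ}
    (A : Matrix (Fin m) (Fin n) ℝ) (hA : A.rank = k)
    (U : Matrix (Fin m) (Fin k) ℝ) (hU : Uᵀ * U = 1)
    (hspan : LinearMap.range A.mulVecLin = LinearMap.range U.mulVecLin)
    (S : Matrix (Fin d) (Fin m) ℝ) (hSA : (S * A).rank = k)
    (M : Matrix (Fin n) (Fin k) ℝ) (hM : (S * A * M)ᵀ * (S * A * M) = 1)
    (hAM : ((A * M)ᵀ * (A * M)).IsHermitian)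
    (hSU : ((S * U)ᵀ * (S * U)).IsHermitian) :
    (A * M).rank = k ∧
      (⨆ i, Real.sqrt (hAM.eigenvalues i)) / (⨅ i, Real.sqrt (hAM.eigenvalues i)) =
        (⨆ i, Real.sqrt (hSU.eigenvalues i)) / (⨅ i, Real.sqrt (hSU.eigenvalues i)) := by
  -- A = U * (Uᵀ * A)
  have hproj : U * (Uᵀ * A) = A := by
    apply matrix_ext_of_mulVec
    intro x
    have hx : A *ᵥ x ∈ LinearMap.range U.mulVecLin := by
      rw [← hspan]; exact ⟨x, rfl⟩
    obtain ⟨y, hy⟩ := hx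
    simp only [Matrix.mulVecLin_apply] at hy
    have h1 : Uᵀ *ᵥ (U *ᵥ y) = y := by
      rw [Matrix.mulVec_mulVec, hU, Matrix.one_mulVec]
    calc (U * (Uᵀ * A)) *ᵥ x = U *ᵥ (Uᵀ *ᵥ (A *ᵥ x)) := by simp [Matrix.mul_assoc]
      _ = U *ᵥ (Uᵀ *ᵥ (U *ᵥ y)) := by rw [hy]
      _ = U *ᵥ y := by rw [h1]
      _ = A *ᵥ x := hy
  obtain ⟨W, hW⟩ : ∃ W : Matrix (Fin k) (Fin k) ℝ, W = Uᵀ * A * M := ⟨_, rfl⟩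
  obtain ⟨G1, hG1⟩ : ∃ G1 : Matrix (Fin k) (Fin k) ℝ, G1 = (A * M)ᵀ * (A * M) := ⟨_, rfl⟩
  obtain ⟨G2, hG2⟩ : ∃ G2 : Matrix (Fin k) (Fin k) ℝ, G2 = (S * U)ᵀ * (S * U) := ⟨_, rfl⟩
  have hAMeq : A * M = U * W := by
    rw [hW, ← Matrix.mul_assoc, hproj]
  have hSAM : S * A * M = (S * U) * W := by
    rw [Matrix.mul_assoc S A M, hAMeq, Matrix.mul_assoc S U W]
  -- hM rewritten
  have hM' : Wᵀ * (G2 * W) = 1 := by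
    rw [hG2]
    calc Wᵀ * ((S * U)ᵀ * (S * U) * W)
        = ((S * U) * W)ᵀ * ((S * U) * W) := by
          rw [Matrix.transpose_mul (S * U) W]; simp only [Matrix.mul_assoc]
      _ = 1 := by rw [← hSAM]; exact hM
  -- W is a unit
  have hWtdet : IsUnit Wᵀ.det := by
    refine IsUnit.of_mul_eq_one ((G2 * W).det) ?_
    rw [← Matrix.det_mul, hM', Matrix.det_one]
  have hWdet : IsUnit W.det := by rwa [Matrix.det_transpose] at hWtdet
  have hWu : IsUnit W := (Matrix.isUnit_iff_isUnit_det W).2 hWdet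
  have hWtu : IsUnit Wᵀ := (Matrix.isUnit_iff_isUnit_det _).2 hWtdet
  -- G1 = Wᵀ * W
  have hG1W : G1 = Wᵀ * W := by
    rw [hG1, hAMeq]
    calc (U * W)ᵀ * (U * W) = Wᵀ * ((Uᵀ * U) * W) := by
          rw [Matrix.transpose_mul U W, Matrix.mul_assoc, ← Matrix.mul_assoc Uᵀ U W]
      _ = Wᵀ * W := by rw [hU, Matrix.one_mul]
  have hG1u : IsUnit G1 := by rw [hG1W]; exact hWtu.mul hWu
  -- G2 = Wᵀ⁻¹ * W⁻¹ and G2 = W * G1⁻¹ * W⁻¹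
  have hG2inv : G2 = Wᵀ⁻¹ * W⁻¹ := by
    calc G2 = (Wᵀ⁻¹ * Wᵀ) * G2 * (W * W⁻¹) := by
          rw [Matrix.nonsing_inv_mul _ hWtdet, Matrix.mul_nonsing_inv _ hWdet,
            Matrix.one_mul, Matrix.mul_one]
      _ = Wᵀ⁻¹ * (Wᵀ * (G2 * W)) * W⁻¹ := by simp only [Matrix.mul_assoc]
      _ = Wᵀ⁻¹ * W⁻¹ := by rw [hM', Matrix.mul_one]
  have hG2conj : G2 = W * G1⁻¹ * W⁻¹ := by
    rw [hG1W, Matrix.mul_inv_rev, ← Matrix.mul_assoc W W⁻¹ Wᵀ⁻¹,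
      Matrix.mul_nonsing_inv _ hWdet, Matrix.one_mul, hG2inv]
  -- rank
  have hrank : (A * M).rank = k := by
    have h1 : ((A * M)ᴴ * (A * M)).rank = (A * M).rank :=
      Matrix.rank_conjTranspose_mul_self (A * M)
    rw [Matrix.conjTranspose_eq_transpose_of_trivial] at h1
    rw [← h1, ← hG1, Matrix.rank_of_isUnit G1 hG1u, Fintype.card_fin]
  refine ⟨hrank, ?_⟩
  -- spectrum relations
  have e1 : spectrum ℝ (G1⁻¹) = (spectrum ℝ G1)⁻¹ := by
    have h := spectrum.map_inv (𝕜 := ℝ) hG1u.unit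
    rw [Matrix.coe_units_inv, hG1u.unit_spec] at h
    exact h.symm
  have e2 : spectrum ℝ G2 = spectrum ℝ (G1⁻¹) := by
    rw [hG2conj]
    have h := spectrum.units_conjugate (R := ℝ) (a := G1⁻¹) (u := hWu.unit)
    rwa [Matrix.coe_units_inv, hWu.unit_spec] at h
  have r1 : Set.range hAM.eigenvalues = spectrum ℝ G1 := by
    rw [hG1]; exact (Matrix.IsHermitian.spectrum_real_eq_range_eigenvalues hAM).symm
  have r2 : Set.range hSU.eigenvalues = spectrum ℝ G2 := by
    rw [hG2]; exact (Matrix.IsHermitian.spectrum_real_eq_range_eigenvalues hSU).symm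
  -- positivity of eigenvalues
  have hG2u : IsUnit G2 := by
    rw [hG2inv]
    exact ((Matrix.isUnit_iff_isUnit_det _).2 (Matrix.isUnit_nonsing_inv_det _ hWtdet)).mul
      ((Matrix.isUnit_iff_isUnit_det _).2 (Matrix.isUnit_nonsing_inv_det _ hWdet))
  have hps1 : ((A * M)ᵀ * (A * M)).PosSemidef := by
    have h := Matrix.posSemidef_conjTranspose_mul_self (A * M)
    rwa [Matrix.conjTranspose_eq_transpose_of_trivial] at h
  have hps2 : ((S * U)ᵀ * (S * U)).PosSemidef := by
    have h := Matrix.posSemidef_conjTranspose_mul_self (S * U)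
    rwa [Matrix.conjTranspose_eq_transpose_of_trivial] at h
  have hapos : ∀ i, 0 < hAM.eigenvalues i := by
    intro i
    refine lt_of_le_of_ne (hps1.eigenvalues_nonneg i) (Ne.symm ?_)
    intro h0
    have hmem : (0 : ℝ) ∈ spectrum ℝ G1 := by rw [← r1]; exact ⟨i, h0⟩
    exact ((spectrum.zero_mem_iff ℝ).mp hmem) hG1u
  have hbpos : ∀ j, 0 < hSU.eigenvalues j := by
    intro j
    refine lt_of_le_of_ne (hps2.eigenvalues_nonneg j) (Ne.symm ?_)
    intro h0
    have hmem : (0 : ℝ) ∈ spectrum ℝ G2 := by rw [← r2]; exact ⟨j, h0⟩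
    exact ((spectrum.zero_mem_iff ℝ).mp hmem) hG2u
  -- relation between eigenvalue families
  have key1 : ∀ i, ∃ j, hAM.eigenvalues i = (hSU.eigenvalues j)⁻¹ := by
    intro i
    have hmem : (hAM.eigenvalues i)⁻¹ ∈ spectrum ℝ G2 := by
      rw [e2, e1, Set.mem_inv, inv_inv, ← r1]
      exact ⟨i, rfl⟩
    rw [← r2] at hmem
    obtain ⟨j, hj⟩ := hmem
    refine ⟨j, ?_⟩
    rw [hj, inv_inv]
  have key2 : ∀ j, ∃ i, (hSU.eigenvalues j)⁻¹ = hAM.eigenvalues i := by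
    intro j
    have hmem : hSU.eigenvalues j ∈ spectrum ℝ G2 := by rw [← r2]; exact ⟨j, rfl⟩
    rw [e2, e1, Set.mem_inv, ← r1] at hmem
    obtain ⟨i, hi⟩ := hmem
    exact ⟨i, hi.symm⟩
  -- k = 0 trivial case
  rcases eq_or_ne k 0 with rfl | hk
  · simp [Real.iSup_of_isEmpty, Real.iInf_of_isEmpty]
  -- general case
  have hGpos : ∀ j, 0 < Real.sqrt (hSU.eigenvalues j) :=
    fun j => Real.sqrt_pos.2 (hbpos j)
  have hFpos : ∀ i, 0 < Real.sqrt (hAM.eigenvalues i) :=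
    fun i => Real.sqrt_pos.2 (hapos i)
  have h1 : ∀ i, ∃ j, Real.sqrt (hAM.eigenvalues i) = (Real.sqrt (hSU.eigenvalues j))⁻¹ := by
    intro i
    obtain ⟨j, hj⟩ := key1 i
    exact ⟨j, by rw [hj, Real.sqrt_inv]⟩
  have h2 : ∀ j, ∃ i, (Real.sqrt (hSU.eigenvalues j))⁻¹ = Real.sqrt (hAM.eigenvalues i) := by
    intro j
    obtain ⟨i, hi⟩ := key2 j
    exact ⟨i, by rw [← hi, Real.sqrt_inv]⟩
  have h1' : ∀ j, ∃ i, Real.sqrt (hSU.eigenvalues j) = (Real.sqrt (hAM.eigenvalues i))⁻¹ := by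
    intro j
    obtain ⟨i, hi⟩ := h2 j
    exact ⟨i, by rw [← hi, inv_inv]⟩
  have h2' : ∀ i, ∃ j, (Real.sqrt (hAM.eigenvalues i))⁻¹ = Real.sqrt (hSU.eigenvalues j) := by
    intro i
    obtain ⟨j, hj⟩ := h1 i
    exact ⟨j, by rw [hj, inv_inv]⟩
  have hsupF := sup_eq_inv_inf hk _ _ hGpos h1 h2
  have hsupG := sup_eq_inv_inf hk _ _ hFpos h1' h2'
  have hinfF : (⨅ i, Real.sqrt (hAM.eigenvalues i))
      = (⨆ j, Real.sqrt (hSU.eigenvalues j))⁻¹ := by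
    rw [hsupG, inv_inv]
  rw [hsupF, hinfF, div_eq_mul_inv, inv_inv, mul_comm, ← div_eq_mul_inv]
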